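/- Let λ = (λ_1,…,λ_l) be nonnegative integers and let |λ| = ∑_k k λ_k. Define the power series Φ_λ^∞(z) = (1-z) ∏_{k=1}^l binom(M_k(z⁻¹), λ_k) (z^k/(1+z^k))^{λ_k}, where M_k(z⁻¹) = (1/k)∑_{j|k} μ(k/j) z^{-j}. Then Φ_λ^∞(z) is a rational function in z whose denominator (after all cancellation of negative powers) has degree at most |λ| and whose numerator has degree at most |λ|+1; consequently the coefficients a_i of its power series expansion satisfy a linear recurrence of length at most |λ| for all i > |λ|+1. -/

import Mathlib

/-- The "binomial coefficient" `binom(x, j) = x(x-1)⋯(x-j+1)/j!` in a field. -/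
noncomputable def ratChoose {K : Type*} [Field K] (x : K) (j : ℕ) : K :=
  (∏ i ∈ Finset.range j, (x - i)) / (Nat.factorial j : K)

/-- The necklace polynomial `M_k(w) = (1/k) ∑_{j ∣ k} μ(k/j) w^j` evaluated in a field. -/
noncomputable def necklace {K : Type*} [Field K] (k : ℕ) (w : K) : K :=
  (1 / (k : K)) * ∑ j ∈ k.divisors, (ArithmeticFunction.moebius (k / j) : K) * w ^ j

open Polynomial in
noncomputable def Pki (k i : ℕ) : Polynomial ℚ :=
  C (1/(k:ℚ)) * ∑ j ∈ k.divisors, C ((ArithmeticFunction.moebius (k/j) : ℤ) : ℚ) * X ^ (k - j)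
    - C (i : ℚ) * X ^ k

open Polynomial in
lemma Pki_natDegree (k i : ℕ) : (Pki k i).natDegree ≤ k := by
  apply le_trans (Polynomial.natDegree_sub_le _ _)
  simp only [max_le_iff]
  refine ⟨le_trans natDegree_mul_le ?_, le_trans natDegree_mul_le (by simp)⟩
  simp only [natDegree_C, zero_add]
  apply Polynomial.natDegree_sum_le_of_forall_le
  intro j hj
  exact le_trans natDegree_mul_le (by simp)

open Polynomial in
lemma Pki_map (k i : ℕ) (hk : 1 ≤ k) :
    algebraMap (Polynomial ℚ) (RatFunc ℚ) (Pki k i)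
      = RatFunc.X ^ k * (necklace k (RatFunc.X⁻¹) - (i : RatFunc ℚ)) := by
  have hX : (RatFunc.X : RatFunc ℚ) ≠ 0 := RatFunc.X_ne_zero
  simp only [Pki, necklace, map_sub, map_mul, map_sum, map_pow, RatFunc.algebraMap_C,
    RatFunc.algebraMap_X, map_div₀, map_one, map_natCast, map_intCast, mul_sub,
    Finset.mul_sum]
  rw [mul_comm (RatFunc.X ^ k) ((i : RatFunc ℚ))]
  congr 1
  apply Finset.sum_congr rfl
  intro j hj
  have hjk : j ≤ k := Nat.le_of_dvd (by omega) (Nat.mem_divisors.mp hj).1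
  rw [inv_pow, pow_sub₀ _ hX hjk]
  ring

open Polynomial in
lemma one_add_Xk_ne_zero (k : ℕ) (hk : 1 ≤ k) : (1 + RatFunc.X ^ k : RatFunc ℚ) ≠ 0 := by
  have h : (1 + X ^ k : Polynomial ℚ) ≠ 0 := by
    intro h
    have := congrArg (fun p => Polynomial.coeff p 0) h
    simp only [Polynomial.coeff_add, Polynomial.coeff_one, Polynomial.coeff_X_pow,
      Polynomial.coeff_zero] at this
    rw [if_pos trivial, if_neg (show ¬(0=k) by omega)] at this
    norm_num at this
  have := RatFunc.algebraMap_ne_zero (K := ℚ) h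
  simpa using this

open Polynomial in
lemma perk (k n : ℕ) (hk : 1 ≤ k) :
    algebraMap (Polynomial ℚ) (RatFunc ℚ) ((1 + X ^ k) ^ n) *
      (ratChoose (necklace k (RatFunc.X⁻¹)) n * (RatFunc.X ^ k / (1 + RatFunc.X ^ k)) ^ n)
    = algebraMap (Polynomial ℚ) (RatFunc ℚ)
        (C (1/(n.factorial : ℚ)) * ∏ i ∈ Finset.range n, Pki k i) := by
  have hu : (1 + RatFunc.X ^ k : RatFunc ℚ) ≠ 0 := one_add_Xk_ne_zero k hk
  have hmap : algebraMap (Polynomial ℚ) (RatFunc ℚ) ((1 + X ^ k) ^ n)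
      = (1 + RatFunc.X ^ k) ^ n := by
    simp [map_pow, map_add, RatFunc.algebraMap_X]
  rw [hmap, ratChoose]
  rw [map_mul, map_prod]
  have hfac : (n.factorial : RatFunc ℚ) ≠ 0 := by
    rw [← map_natCast (algebraMap (Polynomial ℚ) (RatFunc ℚ))]
    exact RatFunc.algebraMap_ne_zero (Nat.cast_ne_zero.mpr n.factorial_ne_zero)
  calc (1 + RatFunc.X ^ k) ^ n *
        ((∏ i ∈ Finset.range n, (necklace k (RatFunc.X⁻¹) - (i : RatFunc ℚ))) / (n.factorial : RatFunc ℚ) *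
          (RatFunc.X ^ k / (1 + RatFunc.X ^ k)) ^ n)
      = (n.factorial : RatFunc ℚ)⁻¹ *
          ∏ i ∈ Finset.range n, (RatFunc.X ^ k * (necklace k (RatFunc.X⁻¹) - (i : RatFunc ℚ))) := by
        rw [Finset.prod_mul_distrib, Finset.prod_const, Finset.card_range]
        rw [div_pow]
        field_simp
    _ = _ := by
        rw [RatFunc.algebraMap_C]
        congr 1
        · rw [one_div, map_inv₀, map_natCast]
        · exact Finset.prod_congr rfl fun i _ => (Pki_map k i hk).symm

/-- For nonnegative integers `λ = (λ_1,…,λ_l)` with `|λ| = ∑ k λ_k·k`,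
the rational function
`Φ_λ^∞(z) = (1-z) ∏_{k=1}^l binom(M_k(z⁻¹), λ_k) (z^k/(1+z^k))^{λ_k}` (an element of
`RatFunc ℚ`) can be written as `N/D` with `D(0) ≠ 0`, `deg N ≤ |λ|+1` and `deg D ≤ |λ|`;
consequently the coefficients of its power series expansion satisfy a linear recurrence
of length at most `|λ|` for all `i > |λ|+1`. -/
theorem stmt14 (l : ℕ) (lam : ℕ → ℕ) (Λ : ℕ) (hΛ : Λ = ∑ k ∈ Finset.Icc 1 l, k * lam k)
    (Φ : RatFunc ℚ)
    (hΦ : Φ = (1 - RatFunc.X) * ∏ k ∈ Finset.Icc 1 l,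
      ratChoose (necklace k (RatFunc.X⁻¹)) (lam k) *
        (RatFunc.X ^ k / (1 + RatFunc.X ^ k)) ^ lam k) :
    ∃ (Np Dp : Polynomial ℚ) (c : ℕ → ℚ),
      Dp.coeff 0 ≠ 0 ∧ Np.natDegree ≤ Λ + 1 ∧ Dp.natDegree ≤ Λ ∧
      (algebraMap (Polynomial ℚ) (RatFunc ℚ) Dp) * Φ =
        algebraMap (Polynomial ℚ) (RatFunc ℚ) Np ∧
      ∀ a : ℕ → ℚ,
        (Dp : PowerSeries ℚ) * PowerSeries.mk a = (Np : PowerSeries ℚ) →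
        ∀ i : ℕ, Λ + 1 < i → a i = ∑ j ∈ Finset.Icc 1 Λ, c j * a (i - j) := by
  classical
  set S := Finset.Icc 1 l with hS
  set Np : Polynomial ℚ := (1 - Polynomial.X) * ∏ k ∈ S,
    (Polynomial.C (1/((lam k).factorial : ℚ)) * ∏ i ∈ Finset.range (lam k), Pki k i) with hNpdef
  set Dp : Polynomial ℚ := ∏ k ∈ S, (1 + Polynomial.X ^ k) ^ (lam k) with hDpdef
  -- coeff 0 of Dp
  have hD0 : Dp.coeff 0 = 1 := by
    rw [Polynomial.coeff_zero_eq_eval_zero, hDpdef, Polynomial.eval_prod]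
    apply Finset.prod_eq_one
    intro k hk
    have hk1 : 1 ≤ k := (Finset.mem_Icc.mp hk).1
    simp [zero_pow (show k ≠ 0 by omega)]
  -- degree of Dp
  have hDdeg : Dp.natDegree ≤ Λ := by
    refine le_trans (Polynomial.natDegree_prod_le _ _) ?_
    rw [hΛ]
    apply Finset.sum_le_sum
    intro k hk
    refine le_trans (Polynomial.natDegree_pow_le) ?_
    have hb : (1 + Polynomial.X ^ k : Polynomial ℚ).natDegree ≤ k :=
      le_trans (Polynomial.natDegree_add_le _ _) (by simp)
    exact le_trans (Nat.mul_le_mul_left (lam k) hb) (le_of_eq (mul_comm _ _))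
  -- degree of Np
  have hNdeg : Np.natDegree ≤ Λ + 1 := by
    refine le_trans (Polynomial.natDegree_mul_le) ?_
    have h1 : (1 - Polynomial.X : Polynomial ℚ).natDegree ≤ 1 :=
      le_trans (Polynomial.natDegree_sub_le _ _) (by simp)
    have h2 : (∏ k ∈ S,
        (Polynomial.C (1/((lam k).factorial : ℚ)) * ∏ i ∈ Finset.range (lam k), Pki k i)).natDegree
        ≤ Λ := by
      refine le_trans (Polynomial.natDegree_prod_le _ _) ?_
      rw [hΛ]
      apply Finset.sum_le_sum
      intro k hk
      refine le_trans (Polynomial.natDegree_mul_le) ?_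
      rw [Polynomial.natDegree_C, zero_add]
      refine le_trans (Polynomial.natDegree_prod_le _ _) ?_
      refine le_trans (Finset.sum_le_sum fun i _ => Pki_natDegree k i) ?_
      simp [mul_comm]
    omega
  -- main identity
  have hmain : (algebraMap (Polynomial ℚ) (RatFunc ℚ) Dp) * Φ =
      algebraMap (Polynomial ℚ) (RatFunc ℚ) Np := by
    rw [hΦ, hDpdef, map_prod, mul_left_comm, ← Finset.prod_mul_distrib]
    rw [Finset.prod_congr rfl (fun k hk => perk k (lam k) (Finset.mem_Icc.mp hk).1)]
    rw [hNpdef, map_mul, ← map_prod]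
    congr 1
    simp [map_sub, map_one, RatFunc.algebraMap_X]
  refine ⟨Np, Dp, fun j => -(Dp.coeff j) / Dp.coeff 0, by rw [hD0]; norm_num, hNdeg, hDdeg, hmain, ?_⟩
  intro a ha i hi
  have hd0 : Dp.coeff 0 ≠ 0 := by rw [hD0]; norm_num
  have hcoeff := congrArg (PowerSeries.coeff i) ha
  rw [PowerSeries.coeff_mul] at hcoeff
  simp only [Polynomial.coeff_coe, PowerSeries.coeff_mk] at hcoeff
  rw [Finset.Nat.sum_antidiagonal_eq_sum_range_succ_mk] at hcoeff
  rw [Polynomial.coeff_eq_zero_of_natDegree_lt (lt_of_le_of_lt hNdeg hi)] at hcoeff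
  rw [Finset.sum_range_succ'] at hcoeff
  simp only [Nat.sub_zero] at hcoeff
  have htrunc : ∑ j ∈ Finset.range i, Dp.coeff (j+1) * a (i-(j+1))
      = ∑ j ∈ Finset.range Λ, Dp.coeff (j+1) * a (i-(j+1)) := by
    symm
    apply Finset.sum_subset (Finset.range_subset_range.mpr (by omega))
    intro j hj hj2
    rw [Polynomial.coeff_eq_zero_of_natDegree_lt
      (lt_of_le_of_lt hDdeg (by simp only [Finset.mem_range, not_lt] at hj2; omega)), zero_mul]
  rw [htrunc] at hcoeff
  have hIcc : ∑ j ∈ Finset.Icc 1 Λ, Dp.coeff j * a (i-j)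
      = ∑ j ∈ Finset.range Λ, Dp.coeff (j+1) * a (i-(j+1)) := by
    rw [← Finset.Ico_add_one_right_eq_Icc, Finset.sum_Ico_eq_sum_range]
    exact Finset.sum_congr rfl fun j _ => by rw [add_comm 1 j]
  -- hcoeff : ∑ range Λ ... + Dp.coeff 0 * a i = 0
  have key : Dp.coeff 0 * a i + ∑ j ∈ Finset.Icc 1 Λ, Dp.coeff j * a (i-j) = 0 := by
    rw [hIcc]; linarith [hcoeff]
  have : a i = -(∑ j ∈ Finset.Icc 1 Λ, Dp.coeff j * a (i-j)) / Dp.coeff 0 := by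
    field_simp
    linarith [key]
  rw [this, neg_div, Finset.sum_div, ← Finset.sum_neg_distrib]
  exact Finset.sum_congr rfl fun j _ => by ring
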